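/- If X is a finite connected k-regular simple graph (k ≥ 2), then its line graph X* is 2(k−1)-regular and the second smallest normalized Laplacian eigenvalues satisfy k·λ₂(X) = 2(k−1)·λ₂(X*). -/

import Mathlib

open Finset Matrix

/-- The adjacency matrix of the dual (line) graph `X*`: two distinct edges of
`X` are adjacent iff they share an endpoint. -/
noncomputable def dualAdj {V : Type} [Fintype V] [DecidableEq V]
    (G : SimpleGraph V) [DecidableRel G.Adj] :
    Matrix G.edgeFinset G.edgeFinset ℝ :=
  Matrix.of fun e f =>
    if e ≠ f ∧ ∃ v, v ∈ (e : Sym2 V) ∧ v ∈ (f : Sym2 V) then 1 else 0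

set_option maxHeartbeats 1000000
set_option linter.unusedVariables false

section
variable {V : Type} [Fintype V] [DecidableEq V] (G : SimpleGraph V) [DecidableRel G.Adj]

noncomputable def myInc : Matrix V G.edgeFinset ℝ :=
  Matrix.of fun v e => if v ∈ (e : Sym2 V) then 1 else 0

lemma myInc_row_sum (v : V) : ∑ e : G.edgeFinset, myInc G v e = G.degree v := by
  have : ∑ e : G.edgeFinset, myInc G v e
      = ∑ e ∈ G.edgeFinset, (if v ∈ e then (1:ℝ) else 0) :=
    Finset.sum_coe_sort G.edgeFinset (fun e => if v ∈ e then (1:ℝ) else 0)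
  rw [this, Finset.sum_boole]
  norm_num
  rw [← SimpleGraph.incidenceFinset_eq_filter, SimpleGraph.card_incidenceFinset_eq_degree]
end

section
variable {V : Type} [Fintype V] [DecidableEq V] (G : SimpleGraph V) [DecidableRel G.Adj]

lemma myInc_mul_transpose (v w : V) :
    (myInc G * (myInc G)ᵀ) v w
      = (if v = w then (G.degree v : ℝ) else 0) + G.adjMatrix ℝ v w := by
  rw [Matrix.mul_apply]
  by_cases hvw : v = w
  · subst hvw
    simp only [transpose_apply, SimpleGraph.adjMatrix_apply, G.irrefl, if_true, if_false,
      add_zero]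
    rw [← myInc_row_sum G v]
    apply Finset.sum_congr rfl
    intro e _
    simp only [myInc, Matrix.of_apply]
    split_ifs <;> ring
  · simp only [hvw, if_false, zero_add, transpose_apply]
    have key : ∀ e : G.edgeFinset,
        myInc G v e * myInc G w e = if (e : Sym2 V) = s(v, w) then (1:ℝ) else 0 := by
      intro e
      simp only [myInc, Matrix.of_apply, ite_mul, one_mul, zero_mul]
      by_cases h1 : v ∈ (e : Sym2 V) <;> by_cases h2 : w ∈ (e : Sym2 V) <;>
        simp [h1, h2, (Sym2.mem_and_mem_iff hvw).symm]
    rw [Finset.sum_congr rfl (fun e _ => key e)]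
    have : ∑ e : G.edgeFinset, (if (e : Sym2 V) = s(v, w) then (1:ℝ) else 0)
        = ∑ e ∈ G.edgeFinset, (if e = s(v, w) then (1:ℝ) else 0) :=
      Finset.sum_coe_sort G.edgeFinset (fun e => if e = s(v, w) then (1:ℝ) else 0)
    rw [this, Finset.sum_ite_eq' G.edgeFinset (s(v, w)) (fun _ => (1:ℝ))]
    simp [SimpleGraph.mem_edgeFinset]

lemma card_mem_sym2 (e : G.edgeFinset) :
    (Finset.univ.filter fun v => v ∈ (e : Sym2 V)).card = 2 := by
  obtain ⟨e, he⟩ := e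
  rw [SimpleGraph.mem_edgeFinset] at he
  induction e with
  | _ a b =>
    rw [SimpleGraph.mem_edgeSet] at he
    have : (Finset.univ.filter fun v => v ∈ s(a, b)) = {a, b} := by
      ext x; simp [Sym2.mem_iff]
    rw [this, Finset.card_pair (G.ne_of_adj he)]

lemma shared_card_le_one (e f : G.edgeFinset) (hef : e ≠ f) :
    (Finset.univ.filter fun v => v ∈ (e : Sym2 V) ∧ v ∈ (f : Sym2 V)).card ≤ 1 := by
  rw [Finset.card_le_one]
  intro a ha b hb
  simp only [Finset.mem_filter] at ha hb
  by_contra hab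
  exact hef (Subtype.ext (((Sym2.mem_and_mem_iff hab).mp ⟨ha.2.1, hb.2.1⟩).trans
    ((Sym2.mem_and_mem_iff hab).mp ⟨ha.2.2, hb.2.2⟩).symm))

lemma myInc_transpose_mul (e f : G.edgeFinset) :
    ((myInc G)ᵀ * myInc G) e f = (if e = f then (2:ℝ) else 0) + dualAdj G e f := by
  rw [Matrix.mul_apply]
  have expand : ∀ v : V, (myInc G)ᵀ e v * myInc G v f
      = if v ∈ (e : Sym2 V) ∧ v ∈ (f : Sym2 V) then (1:ℝ) else 0 := by
    intro v
    simp only [myInc, transpose_apply, Matrix.of_apply]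
    split_ifs <;> simp_all
  rw [Finset.sum_congr rfl (fun v _ => expand v), Finset.sum_boole]
  by_cases hef : e = f
  · subst hef
    simp only [dualAdj, Matrix.of_apply, if_true, ne_eq, not_true_eq_false,
      false_and, if_false, add_zero]
    have : (Finset.univ.filter fun v => v ∈ (e : Sym2 V) ∧ v ∈ (e : Sym2 V))
        = Finset.univ.filter fun v => v ∈ (e : Sym2 V) := by simp
    rw [this, card_mem_sym2]
    norm_num
  · simp only [hef, if_false, zero_add, dualAdj, Matrix.of_apply, ne_eq, hef,
      not_false_eq_true, true_and]
    by_cases hex : ∃ v, v ∈ (e : Sym2 V) ∧ v ∈ (f : Sym2 V)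
    · rw [if_pos hex]
      have h1 : 1 ≤ (Finset.univ.filter fun v => v ∈ (e : Sym2 V) ∧ v ∈ (f : Sym2 V)).card := by
        obtain ⟨v, hv⟩ := hex
        exact Finset.card_pos.mpr ⟨v, by simp [hv]⟩
      have h2 := shared_card_le_one G e f hef
      have : (Finset.univ.filter fun v => v ∈ (e : Sym2 V) ∧ v ∈ (f : Sym2 V)).card = 1 :=
        le_antisymm h2 h1
      rw [this]
      norm_num
    · rw [if_neg hex]
      have : (Finset.univ.filter fun v => v ∈ (e : Sym2 V) ∧ v ∈ (f : Sym2 V)) = ∅ := by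
        rw [Finset.filter_eq_empty_iff]
        intro v _
        exact fun h => hex ⟨v, h⟩
      rw [this]
      simp
end

set_option linter.unusedSectionVars false
section helpers
variable {m n : Type} [Fintype m] [Fintype n] [DecidableEq m] [DecidableEq n]

/-- transfer an eigenpair of B*Bᵀ with nonzero eigenvalue to one of Bᵀ*B -/
lemma eig_transfer (B : Matrix m n ℝ) (c : ℝ) (hc : c ≠ 0) (g : m → ℝ) (hg : g ≠ 0)
    (h : (B * Bᵀ).mulVec g = c • g) :
    Bᵀ.mulVec g ≠ 0 ∧ (Bᵀ * B).mulVec (Bᵀ.mulVec g) = c • Bᵀ.mulVec g := by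
  constructor
  · intro h0
    apply hg
    have : (B * Bᵀ).mulVec g = B.mulVec (Bᵀ.mulVec g) := by
      rw [← Matrix.mulVec_mulVec]
    rw [this, h0, Matrix.mulVec_zero] at h
    have := h.symm
    rw [smul_eq_zero] at this
    tauto
  · have e1 : (Bᵀ * B).mulVec (Bᵀ.mulVec g) = Bᵀ.mulVec ((B * Bᵀ).mulVec g) := by
      rw [Matrix.mulVec_mulVec, Matrix.mulVec_mulVec, Matrix.mul_assoc]
    rw [e1, h, Matrix.mulVec_smul]

/-- eigenvalues of B*Bᵀ are nonnegative -/
lemma eig_nonneg (B : Matrix m n ℝ) (c : ℝ) (g : m → ℝ) (hg : g ≠ 0)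
    (h : (B * Bᵀ).mulVec g = c • g) : 0 ≤ c := by
  have key : c * (g ⬝ᵥ g) = (Bᵀ.mulVec g) ⬝ᵥ (Bᵀ.mulVec g) := by
    have h1 : g ⬝ᵥ (B * Bᵀ).mulVec g = c * (g ⬝ᵥ g) := by
      rw [h, dotProduct_smul, smul_eq_mul]
    rw [← h1, ← Matrix.mulVec_mulVec, dotProduct_mulVec,
      ← Matrix.mulVec_transpose]
  have hgg : 0 < g ⬝ᵥ g := by
    obtain ⟨i, hi⟩ := Function.ne_iff.mp hg
    have : (0:ℝ) < g i * g i := mul_self_pos.mpr hi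
    calc (0:ℝ) < g i * g i := this
    _ ≤ ∑ j, g j * g j := Finset.single_le_sum (f := fun j => g j * g j)
        (fun j _ => mul_self_nonneg _) (Finset.mem_univ i)
  have h2 : 0 ≤ (Bᵀ.mulVec g) ⬝ᵥ (Bᵀ.mulVec g) :=
    Finset.sum_nonneg fun j _ => mul_self_nonneg _
  nlinarith [key, hgg, h2]

/-- generic eigenvalue bound -/
lemma eig_bound (M : Matrix n n ℝ) (C : ℝ) (hC : ∀ i j, |M i j| ≤ C)
    (c : ℝ) (g : n → ℝ) (hg : g ≠ 0) (h : M.mulVec g = c • g) :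
    |c| ≤ Fintype.card n * C := by
  obtain ⟨i0, hi0⟩ := Function.ne_iff.mp hg
  have hne : (Finset.univ : Finset n).Nonempty := ⟨i0, Finset.mem_univ _⟩
  obtain ⟨i, -, hi⟩ := Finset.exists_max_image Finset.univ (fun j => |g j|) hne
  have hgi : 0 < |g i| := lt_of_lt_of_le (abs_pos.mpr hi0) (hi i0 (Finset.mem_univ _))
  have key : |c| * |g i| ≤ (Fintype.card n * C) * |g i| := by
    have h1 : c * g i = ∑ j, M i j * g j := by
      have := congrFun h i
      simp only [Matrix.mulVec, dotProduct, Pi.smul_apply, smul_eq_mul] at this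
      rw [this]
    calc |c| * |g i| = |c * g i| := (abs_mul c (g i)).symm
    _ = |∑ j, M i j * g j| := by rw [h1]
    _ ≤ ∑ j, |M i j * g j| := Finset.abs_sum_le_sum_abs _ _
    _ ≤ ∑ j : n, C * |g i| := by
        apply Finset.sum_le_sum
        intro j _
        rw [abs_mul]
        exact mul_le_mul (hC i j) (hi j (Finset.mem_univ _)) (abs_nonneg _)
          (le_trans (abs_nonneg _) (hC i j))
    _ = (Fintype.card n * C) * |g i| := by
        rw [Finset.sum_const, Finset.card_univ]; ring
  exact le_of_mul_le_mul_right key hgi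

/-- kernel transfer via rank -/
lemma ker_transfer (B : Matrix m n ℝ) (hcard : Fintype.card m ≤ Fintype.card n)
    (g : m → ℝ) (hg : g ≠ 0) (hker : Bᵀ.mulVec g = 0) :
    ∃ h : n → ℝ, h ≠ 0 ∧ B.mulVec h = 0 := by
  have hrankT : Bᵀ.rank + Module.finrank ℝ (LinearMap.ker Bᵀ.mulVecLin) = Fintype.card m := by
    have := LinearMap.finrank_range_add_finrank_ker (Bᵀ.mulVecLin)
    rwa [Module.finrank_fintype_fun_eq_card] at this
  have hkerT : 0 < Module.finrank ℝ (LinearMap.ker Bᵀ.mulVecLin) := by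
    have hmem : g ∈ LinearMap.ker Bᵀ.mulVecLin :=
      LinearMap.mem_ker.mpr (by rw [Matrix.mulVecLin_apply]; exact hker)
    have : Nontrivial (LinearMap.ker Bᵀ.mulVecLin) :=
      ⟨⟨⟨g, hmem⟩, 0, by simpa using hg⟩⟩
    exact Module.finrank_pos
  have hrank : B.rank + Module.finrank ℝ (LinearMap.ker B.mulVecLin) = Fintype.card n := by
    have := LinearMap.finrank_range_add_finrank_ker (B.mulVecLin)
    rwa [Module.finrank_fintype_fun_eq_card] at this
  have hBrank : B.rank = Bᵀ.rank := (Matrix.rank_transpose B).symm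
  have hpos : 0 < Module.finrank ℝ (LinearMap.ker B.mulVecLin) := by omega
  have : Nontrivial (LinearMap.ker B.mulVecLin) := Module.nontrivial_of_finrank_pos hpos
  obtain ⟨⟨h, hmem⟩, hne⟩ := exists_ne (0 : LinearMap.ker B.mulVecLin)
  refine ⟨h, ?_, ?_⟩
  · intro h0; apply hne; ext; simp [h0]
  · have := LinearMap.mem_ker.mp hmem
    rwa [Matrix.mulVecLin_apply] at this

/-- sum of mulVec -/
lemma sum_mulVec (M : Matrix m n ℝ) (x : n → ℝ) :
    ∑ i, (M.mulVec x) i = ∑ j, (∑ i, M i j) * x j := by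
  simp only [Matrix.mulVec, dotProduct]
  rw [Finset.sum_comm]
  simp [Finset.sum_mul]

/-- dropping a maximal point doesn't change the infimum -/
lemma sInf_diff_max (S : Set ℝ) (p : ℝ) (hbdd : BddBelow S)
    (hne : (S \ {p}).Nonempty) (hle : ∀ x ∈ S, x ≤ p) :
    sInf S = sInf (S \ {p}) := by
  apply le_antisymm
  · exact csInf_le_csInf hbdd hne Set.diff_subset
  · apply le_csInf ⟨hne.choose, Set.diff_subset hne.choose_spec⟩
    intro x hx
    by_cases hxp : x = p
    · obtain ⟨t, ht⟩ := hne
      calc sInf (S \ {p}) ≤ t := csInf_le (hbdd.mono Set.diff_subset) ht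
      _ ≤ p := hle t (Set.diff_subset ht)
      _ = x := hxp.symm
    · exact csInf_le (hbdd.mono Set.diff_subset) ⟨hx, hxp⟩
end helpers

set_option linter.unusedSectionVars false
section graph
variable {V : Type} [Fintype V] [DecidableEq V] (G : SimpleGraph V) [DecidableRel G.Adj]
  (k : ℕ)

lemma col_sum_inc (e : G.edgeFinset) : ∑ v, myInc G v e = 2 := by
  have : ∑ v, myInc G v e
      = ((Finset.univ.filter fun v => v ∈ (e : Sym2 V)).card : ℝ) := by
    rw [← Finset.sum_boole]
    rfl
  rw [this, card_mem_sym2]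
  norm_num

lemma BBt_eq (hreg : ∀ v, G.degree v = k) : myInc G * (myInc G)ᵀ = G.adjMatrix ℝ + (k:ℝ) • 1 := by
  ext v w
  rw [myInc_mul_transpose]
  simp only [Matrix.add_apply, Matrix.smul_apply, Matrix.one_apply, smul_eq_mul,
    mul_ite, mul_one, mul_zero, hreg]
  by_cases h : v = w <;> simp [h, add_comm]

lemma BtB_eq : (myInc G)ᵀ * myInc G = dualAdj G + (2:ℝ) • 1 := by
  ext e f
  rw [myInc_transpose_mul]
  simp only [Matrix.add_apply, Matrix.smul_apply, Matrix.one_apply, smul_eq_mul,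
    mul_ite, mul_one, mul_zero]
  by_cases h : e = f
  · subst h
    simp [dualAdj]
  · simp [h, dualAdj]

lemma dual_row_sum (hreg : ∀ v, G.degree v = k) (e : G.edgeFinset) :
    ∑ f, dualAdj G e f = 2 * (k:ℝ) - 2 := by
  have h1 : ∑ f, ((myInc G)ᵀ * myInc G) e f = 2 * (k:ℝ) := by
    simp only [Matrix.mul_apply]
    rw [Finset.sum_comm]
    have : ∀ v : V, ∑ f : G.edgeFinset, (myInc G)ᵀ e v * myInc G v f
        = myInc G v e * (k : ℝ) := by
      intro v
      rw [← Finset.mul_sum]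
      have hrow : ∑ f : G.edgeFinset, myInc G v f = (k:ℝ) := by
        rw [myInc_row_sum, hreg]
      rw [hrow]
      rfl
    rw [Finset.sum_congr rfl (fun v _ => this v), ← Finset.sum_mul, col_sum_inc]
  rw [BtB_eq G] at h1
  simp only [Matrix.add_apply, Matrix.smul_apply, Matrix.one_apply, smul_eq_mul,
    mul_ite, mul_one, mul_zero, Finset.sum_add_distrib, Finset.sum_ite_eq,
    Finset.mem_univ, if_true] at h1
  linarith

lemma dual_count (hreg : ∀ v, G.degree v = k) (hk : 2 ≤ k) (e : G.edgeFinset) :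
    (Finset.univ.filter (fun f : G.edgeFinset =>
      e ≠ f ∧ ∃ v, v ∈ (e : Sym2 V) ∧ v ∈ (f : Sym2 V))).card = 2 * (k - 1) := by
  have h1 : ((Finset.univ.filter (fun f : G.edgeFinset =>
      e ≠ f ∧ ∃ v, v ∈ (e : Sym2 V) ∧ v ∈ (f : Sym2 V))).card : ℝ)
      = ∑ f, dualAdj G e f := by
    rw [← Finset.sum_boole]
    rfl
  rw [dual_row_sum G k hreg] at h1
  have h2 : ((2 * (k - 1) : ℕ) : ℝ) = 2 * (k:ℝ) - 2 := by
    have : 1 ≤ k := le_trans (by norm_num) hk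
    push_cast [this]
    ring
  exact_mod_cast h1.trans h2.symm
end graph

noncomputable def specSet {ι : Type} [Fintype ι] (M : Matrix ι ι ℝ) : Set ℝ :=
  {lam | ∃ g : ι → ℝ, g ≠ 0 ∧ M.mulVec g = lam • g ∧ ∑ i, g i = 0}

lemma specSet_smul {ι : Type} [Fintype ι] (c : ℝ) (hc : 0 < c) (M : Matrix ι ι ℝ) :
    c * sInf (specSet M) = sInf (specSet (c • M)) := by
  rw [← smul_eq_mul, ← Real.sInf_smul_of_nonneg hc.le]
  congr 1
  ext x
  constructor
  · rintro ⟨y, ⟨g, hg, he, hs⟩, rfl⟩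
    refine ⟨g, hg, ?_, hs⟩
    rw [Matrix.smul_mulVec, he, smul_smul]
    rfl
  · rintro ⟨g, hg, he, hs⟩
    refine ⟨x / c, ⟨g, hg, ?_, hs⟩, by simp only [smul_eq_mul]; field_simp⟩
    rw [Matrix.smul_mulVec] at he
    apply smul_right_injective (ι → ℝ) hc.ne'
    show c • (M *ᵥ g) = c • ((x / c) • g)
    rw [he, smul_smul]
    congr 1
    field_simp

lemma eig_shift {ι : Type} [Fintype ι] [DecidableEq ι] (M : Matrix ι ι ℝ) (a lam : ℝ)
    (g : ι → ℝ) : M.mulVec g = lam • g ↔ (a • 1 - M).mulVec g = (a - lam) • g := by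
  rw [Matrix.sub_mulVec, Matrix.smul_mulVec, Matrix.one_mulVec, sub_smul]
  constructor
  · intro h; rw [h]
  · intro h
    exact sub_right_injective (by exact h)

section main
variable {V : Type} [Fintype V] [DecidableEq V] [Nonempty V]

lemma main_sInf_eq (G : SimpleGraph V) [DecidableRel G.Adj] (k : ℕ) (hk : 2 ≤ k)
    (hreg : ∀ v, G.degree v = k) :
    sInf (specSet ((k:ℝ) • 1 - G.adjMatrix ℝ)) =
      sInf (specSet ((2*((k:ℝ)-1)) • (1 : Matrix G.edgeFinset G.edgeFinset ℝ) - dualAdj G)) := by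
  have hkR : (2:ℝ) ≤ (k:ℝ) := by exact_mod_cast hk
  set B := myInc G with hB
  set M1 : Matrix V V ℝ := (k:ℝ) • 1 - G.adjMatrix ℝ with hM1def
  set M2 : Matrix G.edgeFinset G.edgeFinset ℝ :=
    (2*((k:ℝ)-1)) • 1 - dualAdj G with hM2def
  have hM1 : (2*(k:ℝ)) • (1 : Matrix V V ℝ) - B * Bᵀ = M1 := by
    rw [hB, BBt_eq G k hreg, hM1def]
    ext v w
    simp only [Matrix.sub_apply, Matrix.smul_apply, Matrix.add_apply, Matrix.one_apply,
      smul_eq_mul]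
    split_ifs <;> ring
  have hM2 : (2*(k:ℝ)) • (1 : Matrix G.edgeFinset G.edgeFinset ℝ) - Bᵀ * B = M2 := by
    rw [hB, BtB_eq G, hM2def]
    ext e f
    simp only [Matrix.sub_apply, Matrix.smul_apply, Matrix.add_apply, Matrix.one_apply,
      smul_eq_mul]
    split_ifs <;> ring
  have conv1 : ∀ (g : V → ℝ) (lam : ℝ),
      M1.mulVec g = lam • g ↔ (B * Bᵀ).mulVec g = (2*(k:ℝ) - lam) • g := by
    intro g lam
    have h := eig_shift (B * Bᵀ) (2*(k:ℝ)) (2*(k:ℝ) - lam) g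
    rw [hM1, show (2*(k:ℝ) - (2*(k:ℝ) - lam)) = lam from by ring] at h
    exact h.symm
  have conv2 : ∀ (h : G.edgeFinset → ℝ) (lam : ℝ),
      M2.mulVec h = lam • h ↔ (Bᵀ * B).mulVec h = (2*(k:ℝ) - lam) • h := by
    intro g lam
    have h := eig_shift (Bᵀ * B) (2*(k:ℝ)) (2*(k:ℝ) - lam) g
    rw [hM2, show (2*(k:ℝ) - (2*(k:ℝ) - lam)) = lam from by ring] at h
    exact h.symm
  have hsumBt : ∀ g : V → ℝ, ∑ e, (Bᵀ.mulVec g) e = (k:ℝ) * ∑ v, g v := by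
    intro g
    rw [_root_.sum_mulVec]
    have hcol : ∀ v : V, ∑ e : G.edgeFinset, Bᵀ e v = (k:ℝ) := by
      intro v
      have h := myInc_row_sum G v
      rw [hreg] at h
      simpa [Matrix.transpose_apply] using h
    rw [Finset.sum_congr rfl (fun v _ => by rw [hcol v]), ← Finset.mul_sum]
  have hsumB : ∀ h : G.edgeFinset → ℝ, ∑ v, (B.mulVec h) v = 2 * ∑ e, h e := by
    intro h
    rw [_root_.sum_mulVec]
    rw [Finset.sum_congr rfl (fun e _ => by rw [col_sum_inc G e]), ← Finset.mul_sum]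
  -- transfer lemmas
  have htrans12 : ∀ lam ∈ specSet M1, lam ≠ 2*(k:ℝ) → lam ∈ specSet M2 := by
    rintro lam ⟨g, hg, he, hs⟩ hne
    have hc : (2*(k:ℝ) - lam) ≠ 0 := sub_ne_zero.mpr (Ne.symm hne)
    obtain ⟨hh0, hh⟩ := eig_transfer B _ hc g hg ((conv1 g lam).mp he)
    exact ⟨Bᵀ.mulVec g, hh0, (conv2 _ lam).mpr hh, by rw [hsumBt, hs, mul_zero]⟩
  have htrans21 : ∀ lam ∈ specSet M2, lam ≠ 2*(k:ℝ) → lam ∈ specSet M1 := by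
    rintro lam ⟨h, hh, he, hs⟩ hne
    have hc : (2*(k:ℝ) - lam) ≠ 0 := sub_ne_zero.mpr (Ne.symm hne)
    have hBB : (Bᵀ * Bᵀᵀ).mulVec h = (2*(k:ℝ) - lam) • h := by
      rw [Matrix.transpose_transpose]
      exact (conv2 h lam).mp he
    obtain ⟨hh0, hhh⟩ := eig_transfer Bᵀ _ hc h hh hBB
    rw [Matrix.transpose_transpose] at hh0 hhh
    exact ⟨B.mulVec h, hh0, (conv1 _ lam).mpr hhh, by rw [hsumB, hs, mul_zero]⟩
  have hcard : Fintype.card V ≤ Fintype.card G.edgeFinset := by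
    have hsum := G.sum_degrees_eq_twice_card_edges
    rw [Finset.sum_congr rfl (fun v _ => hreg v), Finset.sum_const, smul_eq_mul,
      Finset.card_univ] at hsum
    rw [Fintype.card_coe]
    nlinarith [Fintype.card_pos (α := V), hsum, hk]
  have hspecial : (2*(k:ℝ)) ∈ specSet M1 → (2*(k:ℝ)) ∈ specSet M2 := by
    rintro ⟨g, hg, he, hs⟩
    have hBB : (B * Bᵀ).mulVec g = 0 := by
      have := (conv1 g _).mp he
      rwa [show (2*(k:ℝ) - 2*(k:ℝ)) = 0 from by ring, zero_smul] at this
    have hu : Bᵀ.mulVec g = 0 := by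
      have h1 : g ⬝ᵥ (B * Bᵀ).mulVec g = 0 := by rw [hBB, dotProduct_zero]
      rw [← Matrix.mulVec_mulVec, dotProduct_mulVec, ← Matrix.mulVec_transpose] at h1
      exact dotProduct_self_eq_zero.mp h1
    obtain ⟨h, hh0, hBh⟩ := ker_transfer B hcard g hg hu
    refine ⟨h, hh0, ?_, ?_⟩
    · apply (conv2 h _).mpr
      rw [← Matrix.mulVec_mulVec, hBh, Matrix.mulVec_zero,
        show (2*(k:ℝ) - 2*(k:ℝ)) = 0 from by ring, zero_smul]
    · have h2 := hsumB h
      rw [hBh] at h2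
      simp only [Pi.zero_apply, Finset.sum_const_zero] at h2
      linarith [h2.symm]
  have hle1 : ∀ x ∈ specSet M1, x ≤ 2*(k:ℝ) := by
    rintro x ⟨g, hg, he, hs⟩
    have := eig_nonneg B _ g hg ((conv1 g x).mp he)
    linarith
  have hle2 : ∀ x ∈ specSet M2, x ≤ 2*(k:ℝ) := by
    rintro x ⟨h, hh, he, hs⟩
    have hBB : (Bᵀ * Bᵀᵀ).mulVec h = (2*(k:ℝ) - x) • h := by
      rw [Matrix.transpose_transpose]
      exact (conv2 h x).mp he
    have := eig_nonneg Bᵀ _ h hh hBB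
    linarith
  have hbdd1 : BddBelow (specSet M1) := by
    refine ⟨-(Fintype.card V * (2*(k:ℝ)+2)), ?_⟩
    rintro x ⟨g, hg, he, hs⟩
    have hbound : ∀ v w, |M1 v w| ≤ 2*(k:ℝ)+2 := by
      intro v w
      rw [hM1def]
      simp only [Matrix.sub_apply, Matrix.smul_apply, Matrix.one_apply, smul_eq_mul,
        SimpleGraph.adjMatrix_apply]
      split_ifs <;> (rw [abs_le]; constructor <;> nlinarith [hkR])
    have := eig_bound M1 _ hbound x g hg he
    have habs := neg_abs_le x
    have : |x| ≤ Fintype.card V * (2*(k:ℝ)+2) := this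
    linarith
  have hbdd2 : BddBelow (specSet M2) := by
    refine ⟨-(Fintype.card G.edgeFinset * (2*(k:ℝ)+2)), ?_⟩
    rintro x ⟨h, hh, he, hs⟩
    have hbound : ∀ e f, |M2 e f| ≤ 2*(k:ℝ)+2 := by
      intro e f
      rw [hM2def]
      simp only [Matrix.sub_apply, Matrix.smul_apply, Matrix.one_apply, smul_eq_mul,
        dualAdj, Matrix.of_apply]
      split_ifs <;> (rw [abs_le]; constructor <;> nlinarith [hkR])
    have := eig_bound M2 _ hbound x h hh he
    have habs := neg_abs_le x
    linarith
  have hne1 : (specSet M1).Nonempty := by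
    have hherm : M1.IsHermitian := by
      have : M1ᴴ = M1 := by
        rw [hM1def]
        ext v w
        simp only [Matrix.conjTranspose_apply, Matrix.sub_apply, Matrix.smul_apply,
          Matrix.one_apply, SimpleGraph.adjMatrix_apply, star_trivial, smul_eq_mul]
        by_cases h : v = w
        · subst h; rfl
        · have h' : ¬(w = v) := fun hh => h hh.symm
          rw [if_neg h, if_neg h']
          simp only [G.adj_comm w v]
      exact this
    have hne0 : M1 ≠ 0 := by
      intro h0
      have v0 : V := Classical.arbitrary V
      have := congrFun (congrFun h0 v0) v0
      rw [hM1def] at this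
      simp only [Matrix.sub_apply, Matrix.smul_apply, Matrix.one_apply, if_pos rfl,
        SimpleGraph.adjMatrix_apply, smul_eq_mul, mul_one, Matrix.zero_apply,
        G.irrefl, if_false, sub_zero] at this
      norm_num at this
      linarith
    obtain ⟨g, t, ht, hg, heig⟩ := hherm.exists_eigenvector_of_ne_zero hne0
    have hcol : ∀ w : V, ∑ v, M1 v w = 0 := by
      intro w
      rw [hM1def]
      simp only [Matrix.sub_apply, Matrix.smul_apply, Matrix.one_apply, smul_eq_mul]
      rw [Finset.sum_sub_distrib]
      have h1 : ∑ v : V, (k:ℝ) * (if v = w then 1 else 0) = (k:ℝ) := by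
        simp [Finset.sum_ite_eq']
      have h2 : ∑ v : V, G.adjMatrix ℝ v w = (k:ℝ) := by
        simp only [SimpleGraph.adjMatrix_apply]
        rw [Finset.sum_boole]
        have hfil : (Finset.univ.filter fun v => G.Adj v w) = G.neighborFinset w := by
          ext u
          simp [SimpleGraph.mem_neighborFinset, G.adj_comm]
        rw [hfil]
        rw [SimpleGraph.card_neighborFinset_eq_degree, hreg]
      rw [h1, h2, sub_self]
    have hsz : ∑ v, g v = 0 := by
      have h1 : ∑ v, (M1.mulVec g) v = 0 := by
        rw [_root_.sum_mulVec, Finset.sum_congr rfl (fun w _ => by rw [hcol w])]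
        simp
      rw [heig] at h1
      simp only [Pi.smul_apply, smul_eq_mul, ← Finset.mul_sum] at h1
      rcases mul_eq_zero.mp h1 with h | h
      · exact absurd h ht
      · exact h
    exact ⟨t, g, hg, heig, hsz⟩
  -- final case analysis
  by_cases h2k : (2*(k:ℝ)) ∈ specSet M2
  · have hTT : specSet M1 \ {2*(k:ℝ)} = specSet M2 \ {2*(k:ℝ)} := by
      ext x
      simp only [Set.mem_diff, Set.mem_singleton_iff]
      exact ⟨fun ⟨h1, h2⟩ => ⟨htrans12 x h1 h2, h2⟩, fun ⟨h1, h2⟩ => ⟨htrans21 x h1 h2, h2⟩⟩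
    by_cases hT : (specSet M1 \ {2*(k:ℝ)}).Nonempty
    · rw [sInf_diff_max (specSet M1) _ hbdd1 hT hle1,
        sInf_diff_max (specSet M2) _ hbdd2 (hTT ▸ hT) hle2, hTT]
    · have hM1eq : specSet M1 = {2*(k:ℝ)} := by
        apply Set.eq_singleton_iff_nonempty_unique_mem.mpr
        refine ⟨hne1, fun x hx => ?_⟩
        by_contra hxne
        exact hT ⟨x, hx, hxne⟩
      have hM2eq : specSet M2 = {2*(k:ℝ)} := by
        apply Set.eq_singleton_iff_nonempty_unique_mem.mpr
        refine ⟨⟨_, h2k⟩, fun x hx => ?_⟩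
        by_contra hxne
        have : x ∈ specSet M1 \ {2*(k:ℝ)} := hTT ▸ (⟨hx, hxne⟩ : x ∈ specSet M2 \ {2*(k:ℝ)})
        exact hT ⟨x, this⟩
      rw [hM1eq, hM2eq]
  · have : specSet M1 = specSet M2 := by
      ext x
      constructor
      · intro hx
        rcases eq_or_ne x (2*(k:ℝ)) with rfl | hne
        · exact absurd (hspecial hx) h2k
        · exact htrans12 x hx hne
      · intro hx
        have hne : x ≠ 2*(k:ℝ) := by rintro rfl; exact h2k hx
        exact htrans21 x hx hne
    rw [this]
end main

/-- For a finite connected `k`-regular simple graph `X` (`k ≥ 2`), the line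
graph `X*` is `2(k-1)`-regular, and the second smallest normalized Laplacian
eigenvalues (smallest eigenvalues orthogonal to the constant bottom
eigenvectors) satisfy `k·λ₂(X) = 2(k-1)·λ₂(X*)`. -/
theorem lineGraph_regular_and_eigenvalue_relation {V : Type} [Fintype V]
    [DecidableEq V] [Nonempty V] (G : SimpleGraph V) [DecidableRel G.Adj]
    (k : ℕ) (hk : 2 ≤ k) (hconn : G.Connected) (hreg : ∀ v, G.degree v = k) :
    (∀ e : G.edgeFinset,
      (Finset.univ.filter (fun f : G.edgeFinset =>
        e ≠ f ∧ ∃ v, v ∈ (e : Sym2 V) ∧ v ∈ (f : Sym2 V))).card = 2 * (k - 1)) ∧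
    (k : ℝ) *
      sInf {μ : ℝ | ∃ g : V → ℝ, g ≠ 0 ∧
        (Matrix.of fun v w => (if v = w then (1:ℝ) else 0) -
          (G.adjMatrix ℝ) v w / (k : ℝ)).mulVec g = μ • g ∧ ∑ v, g v = 0} =
    2 * ((k : ℝ) - 1) *
      sInf {μ : ℝ | ∃ g : G.edgeFinset → ℝ, g ≠ 0 ∧
        (Matrix.of fun e f => (if e = f then (1:ℝ) else 0) -
          dualAdj G e f / (2 * ((k : ℝ) - 1))).mulVec g = μ • g ∧ ∑ e, g e = 0} := by
  have hkR : (2:ℝ) ≤ (k:ℝ) := by exact_mod_cast hk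
  have hk0 : (0:ℝ) < (k:ℝ) := by linarith
  have hc2 : (0:ℝ) < 2*((k:ℝ)-1) := by linarith
  refine ⟨fun e => dual_count G k hreg hk e, ?_⟩
  have hm1 : (k:ℝ) • (Matrix.of fun v w => (if v = w then (1:ℝ) else 0) -
      (G.adjMatrix ℝ) v w / (k:ℝ)) = (k:ℝ) • (1 : Matrix V V ℝ) - G.adjMatrix ℝ := by
    ext v w
    simp only [Matrix.smul_apply, Matrix.of_apply, Matrix.sub_apply, Matrix.one_apply,
      smul_eq_mul]
    field_simp
  have hm2 : (2*((k:ℝ)-1)) • (Matrix.of fun e f => (if e = f then (1:ℝ) else 0) -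
      dualAdj G e f / (2 * ((k:ℝ) - 1)))
      = (2*((k:ℝ)-1)) • (1 : Matrix G.edgeFinset G.edgeFinset ℝ) - dualAdj G := by
    ext e f
    simp only [Matrix.smul_apply, Matrix.of_apply, Matrix.sub_apply, Matrix.one_apply,
      smul_eq_mul]
    have hk1 : (k:ℝ) - 1 ≠ 0 := by linarith
    field_simp
  show (k:ℝ) * sInf (specSet (Matrix.of fun v w => (if v = w then (1:ℝ) else 0) -
        (G.adjMatrix ℝ) v w / (k:ℝ)))
      = 2*((k:ℝ)-1) * sInf (specSet (Matrix.of fun e f => (if e = f then (1:ℝ) else 0) -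
        dualAdj G e f / (2*((k:ℝ)-1))))
  rw [specSet_smul _ hk0, hm1, specSet_smul _ hc2, hm2]
  exact main_sInf_eq G k hk hreg
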